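/- The short-circuit evaluation function se is injective on SNF: for all P, Q in SNF, if se(P) = se(Q) then P and Q are syntactically equal. (The paper proves this by constructing an explicit inverse function g with g(se(P)) ≡ P for all P ∈ SNF.) -/

import Mathlib

/-- Evaluation trees over a set `A` of atoms, with leaves `T` and `F`. -/
inductive ETree (A : Type) : Type
  | leafT : ETree A
  | leafF : ETree A
  | node : ETree A → A → ETree A → ETree A

namespace ETree

/-- Leaf replacement `X[T↦Y, F↦Z]`. -/
def repl {A : Type} : ETree A → ETree A → ETree A → ETree A
  | leafT, y, _ => y
  | leafF, _, z => z
  | node l a r, y, z => node (repl l y z) a (repl r y z)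

end ETree

/-- Closed sequential propositional statements over `A`:
`P ::= a | T | F | ¬P | P ∧❛ P | P ∨❛ P`. -/
inductive STerm (A : Type) : Type
  | atom : A → STerm A
  | tt : STerm A
  | ff : STerm A
  | neg : STerm A → STerm A
  | and : STerm A → STerm A → STerm A
  | or : STerm A → STerm A → STerm A

/-- The short-circuit evaluation function `se : S_A → T_A`. -/
def se {A : Type} : STerm A → ETree A
  | .tt => .leafT
  | .ff => .leafF
  | .atom a => .node .leafT a .leafF
  | .neg P => (se P).repl .leafF .leafT
  | .and P Q => (se P).repl (se Q) .leafF
  | .or P Q => (se P).repl .leafT (se Q)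

/-- T-terms: `P^T ::= T | (a ∧❛ P^T) ∨❛ P^T`. -/
inductive IsTTerm {A : Type} : STerm A → Prop
  | tt : IsTTerm .tt
  | node (a : A) {P Q} : IsTTerm P → IsTTerm Q → IsTTerm (.or (.and (.atom a) P) Q)

/-- F-terms: `P^F ::= F | (a ∨❛ P^F) ∧❛ P^F`. -/
inductive IsFTerm {A : Type} : STerm A → Prop
  | ff : IsFTerm .ff
  | node (a : A) {P Q} : IsFTerm P → IsFTerm Q → IsFTerm (.and (.or (.atom a) P) Q)

/-- ℓ-terms: `P^ℓ ::= (a ∧❛ P^T) ∨❛ P^F | (¬a ∧❛ P^T) ∨❛ P^F`. -/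
inductive IsLTerm {A : Type} : STerm A → Prop
  | pos (a : A) {P Q} : IsTTerm P → IsFTerm Q → IsLTerm (.or (.and (.atom a) P) Q)
  | neg (a : A) {P Q} : IsTTerm P → IsFTerm Q → IsLTerm (.or (.and (.neg (.atom a)) P) Q)

mutual
/-- The category `P^c ::= P^ℓ | P^* ∧❛ P^d`. -/
inductive IsCTerm {A : Type} : STerm A → Prop
  | ell {P} : IsLTerm P → IsCTerm P
  | and {P Q} : IsStarTerm P → IsDTerm Q → IsCTerm (.and P Q)

/-- The category `P^d ::= P^ℓ | P^* ∨❛ P^c`. -/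
inductive IsDTerm {A : Type} : STerm A → Prop
  | ell {P} : IsLTerm P → IsDTerm P
  | or {P Q} : IsStarTerm P → IsCTerm Q → IsDTerm (.or P Q)

/-- *-terms: `P^* ::= P^c | P^d`. -/
inductive IsStarTerm {A : Type} : STerm A → Prop
  | c {P} : IsCTerm P → IsStarTerm P
  | d {P} : IsDTerm P → IsStarTerm P
end

/-- SCL Normal Forms: `P ::= P^T | P^F | P^T ∧❛ P^*`. -/
def IsSNF {A : Type} (P : STerm A) : Prop :=
  IsTTerm P ∨ IsFTerm P ∨ ∃ Q R : STerm A, IsTTerm Q ∧ IsStarTerm R ∧ P = .and Q R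

/-! ### Auxiliary development -/

namespace ETree
variable {A : Type}

/-- the tree has a `T` leaf -/
def hasT : ETree A → Prop
  | leafT => True
  | leafF => False
  | node l _ r => hasT l ∨ hasT r

/-- the tree has an `F` leaf -/
def hasF : ETree A → Prop
  | leafT => False
  | leafF => True
  | node l _ r => hasF l ∨ hasF r

/-- size of a tree -/
def size : ETree A → ℕ
  | leafT => 1
  | leafF => 1
  | node l _ r => size l + size r + 1

lemma size_pos (X : ETree A) : 0 < X.size := by
  cases X <;> simp [size]

lemma hasT_repl (X y z : ETree A) :
    (X.repl y z).hasT ↔ (X.hasT ∧ y.hasT) ∨ (X.hasF ∧ z.hasT) := by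
  induction X with
  | leafT => simp [repl, hasT, hasF]
  | leafF => simp [repl, hasT, hasF]
  | node l a r ihl ihr => simp [repl, hasT, hasF, ihl, ihr]; tauto

lemma hasF_repl (X y z : ETree A) :
    (X.repl y z).hasF ↔ (X.hasT ∧ y.hasF) ∨ (X.hasF ∧ z.hasF) := by
  induction X with
  | leafT => simp [repl, hasT, hasF]
  | leafF => simp [repl, hasT, hasF]
  | node l a r ihl ihr => simp [repl, hasT, hasF, ihl, ihr]; tauto

lemma repl_comp (X y z y' z' : ETree A) :
    (X.repl y z).repl y' z' = X.repl (y.repl y' z') (z.repl y' z') := by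
  induction X with
  | leafT => rfl
  | leafF => rfl
  | node l a r ihl ihr => simp [repl, ihl, ihr]

lemma repl_eq_self_T {X : ETree A} (hX : ¬ X.hasF) (z : ETree A) :
    X.repl .leafT z = X := by
  induction X with
  | leafT => rfl
  | leafF => exact absurd trivial hX
  | node l a r ihl ihr =>
      simp only [hasF] at hX
      push_neg at hX
      simp [repl, ihl hX.1, ihr hX.2]

lemma repl_eq_self_F {X : ETree A} (hX : ¬ X.hasT) (y : ETree A) :
    X.repl y .leafF = X := by
  induction X with
  | leafT => exact absurd trivial hX
  | leafF => rfl
  | node l a r ihl ihr =>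
      simp only [hasT] at hX
      push_neg at hX
      simp [repl, ihl hX.1, ihr hX.2]

lemma repl_congr_y {X : ETree A} (hX : ¬ X.hasT) (y y' z : ETree A) :
    X.repl y z = X.repl y' z := by
  induction X with
  | leafT => exact absurd trivial hX
  | leafF => rfl
  | node l a r ihl ihr =>
      simp only [hasT] at hX
      push_neg at hX
      simp [repl, ihl hX.1, ihr hX.2]

lemma repl_congr_z {X : ETree A} (hX : ¬ X.hasF) (y z z' : ETree A) :
    X.repl y z = X.repl y z' := by
  induction X with
  | leafT => rfl
  | leafF => exact absurd trivial hX
  | node l a r ihl ihr =>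
      simp only [hasF] at hX
      push_neg at hX
      simp [repl, ihl hX.1, ihr hX.2]

lemma size_le_repl_T {X : ETree A} (hX : X.hasT) (y z : ETree A) :
    y.size ≤ (X.repl y z).size := by
  induction X with
  | leafT => simp [repl]
  | leafF => exact absurd hX (by simp [hasT])
  | node l a r ihl ihr =>
      rcases hX with h | h
      · have := ihl h
        simp only [repl, size]
        omega
      · have := ihr h
        simp only [repl, size]
        omega

lemma size_le_repl_F {X : ETree A} (hX : X.hasF) (y z : ETree A) :
    z.size ≤ (X.repl y z).size := by
  induction X with
  | leafT => exact absurd hX (by simp [hasF])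
  | leafF => simp [repl]
  | node l a r ihl ihr =>
      rcases hX with h | h
      · have := ihl h
        simp only [repl, size]
        omega
      · have := ihr h
        simp only [repl, size]
        omega

end ETree

section Dev
variable {A : Type}

open ETree

/-- grafting a `*`-continuation onto a T-term tree -/
def gT (t : STerm A) : Option (STerm A) → ETree A
  | none => se t
  | some u => (se t).repl (se u) .leafF

/-- grafting a `*`-continuation onto an F-term tree -/
def gF (f : STerm A) : Option (STerm A) → ETree A
  | none => se f
  | some v => (se f).repl .leafT (se v)

def optStar (U : Option (STerm A)) : Prop := ∀ u, U = some u → IsStarTerm u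

lemma optStar_none : optStar (A := A) none := by intro u h; cases h

lemma optStar_some {u : STerm A} (h : IsStarTerm u) : optStar (some u) := by
  intro u' h'; cases h'; exact h

lemma tt_hasT {t : STerm A} (h : IsTTerm t) : (se t).hasT := by
  induction h with
  | tt => trivial
  | node a hP hQ ihP ihQ =>
      simp only [se, hasT_repl, hasF_repl, hasT, hasF]
      tauto

lemma tt_noF {t : STerm A} (h : IsTTerm t) : ¬ (se t).hasF := by
  induction h with
  | tt => simp [se, hasF]
  | node a hP hQ ihP ihQ =>
      simp only [se, hasF_repl, hasT_repl, hasT, hasF]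
      tauto

lemma ff_hasF {f : STerm A} (h : IsFTerm f) : (se f).hasF := by
  induction h with
  | ff => trivial
  | node a hP hQ ihP ihQ =>
      simp only [se, hasF_repl, hasT_repl, hasT, hasF]
      tauto

lemma ff_noT {f : STerm A} (h : IsFTerm f) : ¬ (se f).hasT := by
  induction h with
  | ff => simp [se, hasT]
  | node a hP hQ ihP ihQ =>
      simp only [se, hasT_repl, hasF_repl, hasT, hasF]
      tauto

lemma se_tnode (a : A) (P Q : STerm A) (h : ¬ (se P).hasF) :
    se (.or (.and (.atom a) P) Q) = .node (se P) a (se Q) := by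
  show ((se (.atom a)).repl (se P) .leafF).repl .leafT (se Q) = _
  simp only [se, repl]
  simp [repl, repl_eq_self_T h]

lemma se_lneg (a : A) (P Q : STerm A) (h : ¬ (se P).hasF) :
    se (.or (.and (.neg (.atom a)) P) Q) = .node (se Q) a (se P) := by
  show ((se (.neg (.atom a))).repl (se P) .leafF).repl .leafT (se Q) = _
  simp only [se, repl]
  simp [repl, repl_eq_self_T h]

lemma se_fnode (a : A) (P Q : STerm A) (h : ¬ (se P).hasT) :
    se (.and (.or (.atom a) P) Q) = .node (se Q) a (se P) := by
  show ((se (.atom a)).repl .leafT (se P)).repl (se Q) .leafF = _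
  simp only [se, repl]
  simp [repl, repl_eq_self_F h]

end Dev
section Dev2
variable {A : Type}
open ETree

lemma star_shape {P : STerm A} (h : IsStarTerm P) :
    IsLTerm P ∨ (∃ P1 D, IsStarTerm P1 ∧ IsDTerm D ∧ P = .and P1 D)
      ∨ (∃ P1 C, IsStarTerm P1 ∧ IsCTerm C ∧ P = .or P1 C) := by
  cases h with
  | c h =>
      cases h with
      | ell h => exact Or.inl h
      | and h1 h2 => exact Or.inr (Or.inl ⟨_, _, h1, h2, rfl⟩)
  | d h =>
      cases h with
      | ell h => exact Or.inl h
      | or h1 h2 => exact Or.inr (Or.inr ⟨_, _, h1, h2, rfl⟩)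

lemma star_not_atom {a : A} (h : IsStarTerm (.atom a)) : False := by
  rcases star_shape h with h | ⟨_,_,_,_,h⟩ | ⟨_,_,_,_,h⟩
  · cases h
  · cases h
  · cases h

lemma star_not_neg {x : STerm A} (h : IsStarTerm (.neg x)) : False := by
  rcases star_shape h with h | ⟨_,_,_,_,h⟩ | ⟨_,_,_,_,h⟩
  · cases h
  · cases h
  · cases h

lemma star_and_left {X Y : STerm A} (h : IsStarTerm (.and X Y)) : IsStarTerm X := by
  rcases star_shape h with h | ⟨P1,D,h1,h2,h⟩ | ⟨_,_,_,_,h⟩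
  · cases h
  · cases h; exact h1
  · cases h

lemma star_hasTF {P : STerm A} (h : IsStarTerm P) : (se P).hasT ∧ (se P).hasF := by
  suffices H : ∀ n (P : STerm A), sizeOf P ≤ n → IsStarTerm P → (se P).hasT ∧ (se P).hasF by
    exact H _ P le_rfl h
  clear h P
  intro n
  induction n using Nat.strong_induction_on with
  | _ n IH =>
  intro P hle h
  rcases star_shape h with hl | ⟨P1, D, h1, h2, rfl⟩ | ⟨P1, C, h1, h2, rfl⟩
  · cases hl with
    | pos a ht hf =>
        rw [se_tnode _ _ _ (tt_noF ht)]
        exact ⟨Or.inl (tt_hasT ht), Or.inr (ff_hasF hf)⟩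
    | neg a ht hf =>
        rw [se_lneg _ _ _ (tt_noF ht)]
        exact ⟨Or.inr (tt_hasT ht), Or.inl (ff_hasF hf)⟩
  · have hP1 := IH (sizeOf P1) (by simp at hle ⊢; omega) P1 le_rfl h1
    have hD := IH (sizeOf D) (by simp at hle ⊢; omega) D le_rfl (IsStarTerm.d h2)
    constructor
    · show ((se P1).repl (se D) .leafF).hasT
      rw [hasT_repl]; exact Or.inl ⟨hP1.1, hD.1⟩
    · show ((se P1).repl (se D) .leafF).hasF
      rw [hasF_repl]; exact Or.inr ⟨hP1.2, trivial⟩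
  · have hP1 := IH (sizeOf P1) (by simp at hle ⊢; omega) P1 le_rfl h1
    have hC := IH (sizeOf C) (by simp at hle ⊢; omega) C le_rfl (IsStarTerm.c h2)
    constructor
    · show ((se P1).repl .leafT (se C)).hasT
      rw [hasT_repl]; exact Or.inl ⟨hP1.1, trivial⟩
    · show ((se P1).repl .leafT (se C)).hasF
      rw [hasF_repl]; exact Or.inr ⟨hP1.2, hC.2⟩

def bAnd : Option (STerm A) → STerm A → STerm A
  | none, D => D
  | some u, D => .and u D

def bOr : Option (STerm A) → STerm A → STerm A
  | none, C => C
  | some v, C => .or v C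

/-- decomposition of a `*`-term into sign, root atom, T-part, F-part, and the two
optional continuations -/
inductive Dec : STerm A → Bool → A → STerm A → STerm A → Option (STerm A) → Option (STerm A) → Prop
  | lpos (a : A) (t f : STerm A) : IsTTerm t → IsFTerm f →
      Dec (.or (.and (.atom a) t) f) true a t f none none
  | lneg (a : A) (t f : STerm A) : IsTTerm t → IsFTerm f →
      Dec (.or (.and (.neg (.atom a)) t) f) false a t f none none
  | and {P : STerm A} {s a t f U V} (D : STerm A) : IsDTerm D → Dec P s a t f U V →
      Dec (.and P D) s a t f (some (bAnd U D)) (V.map (fun v => .and v D))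
  | or {P : STerm A} {s a t f U V} (C : STerm A) : IsCTerm C → Dec P s a t f U V →
      Dec (.or P C) s a t f (U.map (fun u => .or u C)) (some (bOr V C))

lemma dec_exists {P : STerm A} (h : IsStarTerm P) :
    ∃ s a t f U V, Dec P s a t f U V := by
  suffices H : ∀ n (P : STerm A), sizeOf P ≤ n → IsStarTerm P → ∃ s a t f U V, Dec P s a t f U V by
    exact H _ P le_rfl h
  clear h P
  intro n
  induction n using Nat.strong_induction_on with
  | _ n IH =>
  intro P hle h
  rcases star_shape h with hl | ⟨P1, D, h1, h2, rfl⟩ | ⟨P1, C, h1, h2, rfl⟩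
  · cases hl with
    | pos a ht hf => exact ⟨_, _, _, _, _, _, Dec.lpos a _ _ ht hf⟩
    | neg a ht hf => exact ⟨_, _, _, _, _, _, Dec.lneg a _ _ ht hf⟩
  · obtain ⟨s, a, t, f, U, V, hd⟩ := IH (sizeOf P1) (by simp at hle ⊢; omega) P1 le_rfl h1
    exact ⟨_, _, _, _, _, _, Dec.and D h2 hd⟩
  · obtain ⟨s, a, t, f, U, V, hd⟩ := IH (sizeOf P1) (by simp at hle ⊢; omega) P1 le_rfl h1
    exact ⟨_, _, _, _, _, _, Dec.or C h2 hd⟩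

lemma dec_classes {P : STerm A} {s a t f U V} (h : Dec P s a t f U V) :
    IsTTerm t ∧ IsFTerm f ∧ optStar U ∧ optStar V := by
  induction h with
  | lpos a t f ht hf => exact ⟨ht, hf, optStar_none, optStar_none⟩
  | lneg a t f ht hf => exact ⟨ht, hf, optStar_none, optStar_none⟩
  | and D hD hsub ih =>
      obtain ⟨ht, hf, hU, hV⟩ := ih
      refine ⟨ht, hf, ?_, ?_⟩
      · intro u hu
        cases hu
        rename_i U' V'
        cases U' with
        | none => exact IsStarTerm.d hD
        | some u0 => exact IsStarTerm.c (IsCTerm.and (hU u0 rfl) hD)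
      · intro v hv
        rename_i U' V'
        cases V' with
        | none => cases hv
        | some v0 =>
            simp only [Option.map_some] at hv
            cases hv
            exact IsStarTerm.c (IsCTerm.and (hV v0 rfl) hD)
  | or C hC hsub ih =>
      obtain ⟨ht, hf, hU, hV⟩ := ih
      refine ⟨ht, hf, ?_, ?_⟩
      · intro u hu
        rename_i U' V'
        cases U' with
        | none => cases hu
        | some u0 =>
            simp only [Option.map_some] at hu
            cases hu
            exact IsStarTerm.d (IsDTerm.or (hU u0 rfl) hC)
      · intro v hv
        cases hv
        rename_i U' V'
        cases V' with
        | none => exact IsStarTerm.c hC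
        | some v0 => exact IsStarTerm.d (IsDTerm.or (hV v0 rfl) hC)

lemma gT_and (t : STerm A) (U : Option (STerm A)) (D : STerm A) :
    (gT t U).repl (se D) .leafF = gT t (some (bAnd U D)) := by
  cases U with
  | none => rfl
  | some u =>
      show ((se t).repl (se u) .leafF).repl (se D) .leafF = (se t).repl (se (.and u D)) .leafF
      rw [repl_comp]
      rfl

lemma gF_and {f : STerm A} (hf : ¬ (se f).hasT) (V : Option (STerm A)) (D : STerm A) :
    (gF f V).repl (se D) .leafF = gF f (V.map (fun v => .and v D)) := by
  cases V with
  | none => exact repl_eq_self_F hf _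
  | some v =>
      show ((se f).repl .leafT (se v)).repl (se D) .leafF
        = (se f).repl .leafT (se (.and v D))
      rw [repl_comp]
      simp only [repl]
      exact repl_congr_y hf _ _ _

lemma gT_or {t : STerm A} (ht : ¬ (se t).hasF) (U : Option (STerm A)) (C : STerm A) :
    (gT t U).repl .leafT (se C) = gT t (U.map (fun u => .or u C)) := by
  cases U with
  | none => exact repl_eq_self_T ht _
  | some u =>
      show ((se t).repl (se u) .leafF).repl .leafT (se C)
        = (se t).repl (se (.or u C)) .leafF
      rw [repl_comp]
      simp only [repl]
      exact repl_congr_z ht _ _ _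

lemma gF_or (f : STerm A) (V : Option (STerm A)) (C : STerm A) :
    (gF f V).repl .leafT (se C) = gF f (some (bOr V C)) := by
  cases V with
  | none => rfl
  | some v =>
      show ((se f).repl .leafT (se v)).repl .leafT (se C)
        = (se f).repl .leafT (se (.or v C))
      rw [repl_comp]
      rfl

lemma dec_se {P : STerm A} {s a t f U V} (h : Dec P s a t f U V) :
    se P = .node (cond s (gT t U) (gF f V)) a (cond s (gF f V) (gT t U)) := by
  induction h with
  | lpos a t f ht hf => exact se_tnode a t f (tt_noF ht)
  | lneg a t f ht hf => exact se_lneg a t f (tt_noF ht)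
  | and D hD hsub ih =>
      obtain ⟨ht, hf, -, -⟩ := dec_classes hsub
      show (se _).repl (se D) .leafF = _
      rw [ih]
      rename_i P' s' a' t' f' U' V'
      cases s' <;>
        simp only [cond, repl, gT_and, gF_and (ff_noT hf)]
  | or C hC hsub ih =>
      obtain ⟨ht, hf, -, -⟩ := dec_classes hsub
      show (se _).repl .leafT (se C) = _
      rw [ih]
      rename_i P' s' a' t' f' U' V'
      cases s' <;>
        simp only [cond, repl, gT_or (tt_noF ht), gF_or]

lemma gT_node (a : A) {ta : STerm A} (tb : STerm A) (hta : IsTTerm ta)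
    (U : Option (STerm A)) :
    gT (.or (.and (.atom a) ta) tb) U = .node (gT ta U) a (gT tb U) := by
  cases U with
  | none => exact se_tnode a ta tb (tt_noF hta)
  | some u =>
      show (se (.or (.and (.atom a) ta) tb)).repl (se u) .leafF = _
      rw [se_tnode a ta tb (tt_noF hta)]
      rfl

lemma gF_node (a : A) {fa : STerm A} (fb : STerm A) (hfa : IsFTerm fa)
    (V : Option (STerm A)) :
    gF (.and (.or (.atom a) fa) fb) V = .node (gF fb V) a (gF fa V) := by
  cases V with
  | none => exact se_fnode a fa fb (ff_noT hfa)
  | some v =>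
      show (se (.and (.or (.atom a) fa) fb)).repl .leafT (se v) = _
      rw [se_fnode a fa fb (ff_noT hfa)]
      rfl

lemma hasT_gT {t : STerm A} {U : Option (STerm A)} (ht : IsTTerm t) (hU : optStar U) :
    (gT t U).hasT := by
  cases U with
  | none => exact tt_hasT ht
  | some u =>
      show ((se t).repl (se u) .leafF).hasT
      rw [hasT_repl]
      exact Or.inl ⟨tt_hasT ht, (star_hasTF (hU u rfl)).1⟩

lemma hasF_gT_some {t u : STerm A} (ht : IsTTerm t) (hu : IsStarTerm u) :
    (gT t (some u)).hasF := by
  show ((se t).repl (se u) .leafF).hasF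
  rw [hasF_repl]
  exact Or.inl ⟨tt_hasT ht, (star_hasTF hu).2⟩

lemma hasF_gF {f : STerm A} {V : Option (STerm A)} (hf : IsFTerm f) (hV : optStar V) :
    (gF f V).hasF := by
  cases V with
  | none => exact ff_hasF hf
  | some v =>
      show ((se f).repl .leafT (se v)).hasF
      rw [hasF_repl]
      exact Or.inr ⟨ff_hasF hf, (star_hasTF (hV v rfl)).2⟩

lemma hasT_gF_some {f v : STerm A} (hf : IsFTerm f) (hv : IsStarTerm v) :
    (gF f (some v)).hasT := by
  show ((se f).repl .leafT (se v)).hasT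
  rw [hasT_repl]
  exact Or.inr ⟨ff_hasF hf, (star_hasTF hv).1⟩

end Dev2
section Dev3
variable {A : Type}
open ETree

inductive Link : STerm A → STerm A → Prop
  | base (U C : STerm A) : Link (.or U C) C
  | and {U V : STerm A} (E : STerm A) : Link U V → Link (.and U E) (.and V E)
  | or {U V : STerm A} (E : STerm A) : Link U V → Link (.or U E) (.or V E)

inductive Link' : STerm A → STerm A → Prop
  | base (V D : STerm A) : Link' D (.and V D)
  | and {U V : STerm A} (E : STerm A) : Link' U V → Link' (.and U E) (.and V E)
  | or {U V : STerm A} (E : STerm A) : Link' U V → Link' (.or U E) (.or V E)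

lemma link_size {U V : STerm A} (h : Link U V) : sizeOf V < sizeOf U := by
  induction h with
  | base U C => simp only [STerm.or.sizeOf_spec]; omega
  | and E h ih => simp only [STerm.and.sizeOf_spec]; omega
  | or E h ih => simp only [STerm.or.sizeOf_spec]; omega

lemma link'_size {U V : STerm A} (h : Link' U V) : sizeOf U < sizeOf V := by
  induction h with
  | base V D => simp only [STerm.and.sizeOf_spec]; omega
  | and E h ih => simp only [STerm.and.sizeOf_spec]; omega
  | or E h ih => simp only [STerm.or.sizeOf_spec]; omega

lemma link_asym {U V : STerm A} (h : Link U V) (h' : Link' V U) : False := by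
  induction h with
  | base U1 C => cases h'
  | and E h ih =>
      cases h' with
      | and E2 h2 => exact ih h2
  | or E h ih =>
      cases h' with
      | or E2 h2 => exact ih h2

lemma link_or_link'_asym {U V : STerm A} (h : Link U V ∨ Link' U V)
    (h' : Link V U ∨ Link' V U) : False := by
  rcases h with h | h <;> rcases h' with h' | h'
  · have := link_size h; have := link_size h'; omega
  · exact link_asym h h'
  · exact link_asym h' h
  · have := link'_size h; have := link'_size h'; omega

lemma dec_link {P : STerm A} {s a t f U V} (h : Dec P s a t f U V) :
    ∀ u v, U = some u → V = some v → Link u v ∨ Link' u v := by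
  induction h with
  | lpos a t f ht hf => intro u v hu hv; cases hu
  | lneg a t f ht hf => intro u v hu hv; cases hu
  | and D hD hsub ih =>
      intro u v hu hv
      rename_i U' V'
      cases V' with
      | none => cases hv
      | some v0 =>
          simp only [Option.map_some] at hv
          cases hv
          cases hu
          cases U' with
          | none => exact Or.inr (Link'.base v0 D)
          | some u0 =>
              rcases ih u0 v0 rfl rfl with h | h
              · exact Or.inl (Link.and D h)
              · exact Or.inr (Link'.and D h)
  | or C hC hsub ih =>
      intro u v hu hv
      rename_i U' V'
      cases U' with
      | none => cases hu
      | some u0 =>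
          simp only [Option.map_some] at hu
          cases hu
          cases hv
          cases V' with
          | none => exact Or.inl (Link.base u0 C)
          | some v0 =>
              rcases ih u0 v0 rfl rfl with h | h
              · exact Or.inl (Link.or C h)
              · exact Or.inr (Link'.or C h)

end Dev3
section Dev4
variable {A : Type}
open ETree

lemma d_not_and {X Y : STerm A} (h : IsDTerm (.and X Y)) : False := by
  cases h with
  | ell hl => cases hl

lemma c_not_or {X Y : STerm A} (hs : IsStarTerm X) (h : IsCTerm (.or X Y)) : False := by
  cases h with
  | ell hl =>
      cases hl with
      | pos a ht hf => exact star_not_atom (star_and_left hs)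
      | neg a ht hf => exact star_not_neg (star_and_left hs)

lemma psiInj {P : STerm A} {s a t f U V} (hP : Dec P s a t f U V) :
    ∀ {Q s2 a2 t2 f2 U2 V2}, Dec Q s2 a2 t2 f2 U2 V2 →
      s = s2 → a = a2 → t = t2 → f = f2 → U = U2 → V = V2 → P = Q := by
  induction hP with
  | lpos a t f ht hf =>
      intro Q s2 a2 t2 f2 U2 V2 hQ hs ha htq hfq hU hV
      cases hQ with
      | lpos a' t' f' ht' hf' => cases ha; cases htq; cases hfq; rfl
      | lneg a' t' f' ht' hf' => cases hs
      | and D2 hD2 hsub2 => cases hU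
      | or C2 hC2 hsub2 => cases hV
  | lneg a t f ht hf =>
      intro Q s2 a2 t2 f2 U2 V2 hQ hs ha htq hfq hU hV
      cases hQ with
      | lpos a' t' f' ht' hf' => cases hs
      | lneg a' t' f' ht' hf' => cases ha; cases htq; cases hfq; rfl
      | and D2 hD2 hsub2 => cases hU
      | or C2 hC2 hsub2 => cases hV
  | and D hD hsub ih =>
      intro Q s2 a2 t2 f2 U2 V2 hQ hs ha htq hfq hU hV
      cases hQ with
      | lpos a' t' f' ht' hf' => cases hU
      | lneg a' t' f' ht' hf' => cases hU
      | and D2 hD2 hsub2 =>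
          rename_i P1 U1 V1 Q1 U3 V3
          injection hU with hU'
          have hDD : D = D2 ∧ U1 = U3 := by
            cases U1 with
            | none =>
                cases U3 with
                | none => exact ⟨hU', rfl⟩
                | some u3 =>
                    simp only [bAnd] at hU'
                    rw [hU'] at hD
                    exact absurd hD (fun h => d_not_and h)
            | some u1 =>
                cases U3 with
                | none =>
                    simp only [bAnd] at hU'
                    rw [← hU'] at hD2
                    exact absurd hD2 (fun h => d_not_and h)
                | some u3 =>
                    simp only [bAnd, STerm.and.injEq] at hU'
                    exact ⟨hU'.2, by rw [hU'.1]⟩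
          have hVV : V1 = V3 := by
            cases V1 with
            | none =>
                cases V3 with
                | none => rfl
                | some v3 => simp at hV
            | some v1 =>
                cases V3 with
                | none => simp at hV
                | some v3 =>
                    simp only [Option.map_some, Option.some.injEq, STerm.and.injEq] at hV
                    rw [hV.1]
          rw [ih hsub2 hs ha htq hfq hDD.2 hVV, hDD.1]
      | or C2 hC2 hsub2 =>
          rename_i P1 U1 V1 Q1 U3 V3
          exfalso
          cases U3 with
          | none => simp at hU
          | some u3 =>
              simp only [Option.map_some] at hU
              injection hU with hU'
              cases U1 with
              | some u1 => simp [bAnd] at hU'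
              | none =>
                  simp only [bAnd] at hU'
                  cases V1 with
                  | none => simp at hV
                  | some v1 =>
                      simp only [Option.map_some] at hV
                      injection hV with hV'
                      cases V3 with
                      | some v3 => simp [bOr] at hV'
                      | none =>
                          simp only [bOr] at hV'
                          rw [← hV'] at hU'
                          have := congrArg sizeOf hU'
                          simp only [STerm.or.sizeOf_spec, STerm.and.sizeOf_spec] at this
                          omega
  | or C hC hsub ih =>
      intro Q s2 a2 t2 f2 U2 V2 hQ hs ha htq hfq hU hV
      cases hQ with
      | lpos a' t' f' ht' hf' => cases hV
      | lneg a' t' f' ht' hf' => cases hV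
      | and D2 hD2 hsub2 =>
          rename_i P1 U1 V1 Q1 U3 V3
          exfalso
          cases U1 with
          | none => simp at hU
          | some u1 =>
              simp only [Option.map_some] at hU
              injection hU with hU'
              cases U3 with
              | some u3 => simp [bAnd] at hU'
              | none =>
                  simp only [bAnd] at hU'
                  cases V3 with
                  | none => simp at hV
                  | some v3 =>
                      simp only [Option.map_some] at hV
                      injection hV with hV'
                      cases V1 with
                      | some v1 => simp [bOr] at hV'
                      | none =>
                          simp only [bOr] at hV'
                          rw [hV'] at hU'
                          have := congrArg sizeOf hU'
                          simp only [STerm.or.sizeOf_spec, STerm.and.sizeOf_spec] at this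
                          omega
      | or C2 hC2 hsub2 =>
          rename_i P1 U1 V1 Q1 U3 V3
          injection hV with hV'
          have hCC : C = C2 ∧ V1 = V3 := by
            cases V1 with
            | none =>
                cases V3 with
                | none => exact ⟨hV', rfl⟩
                | some v3 =>
                    simp only [bOr] at hV'
                    rw [hV'] at hC
                    have hv3 : IsStarTerm v3 := (dec_classes hsub2).2.2.2 v3 rfl
                    exact absurd hC (fun h => c_not_or hv3 h)
            | some v1 =>
                cases V3 with
                | none =>
                    simp only [bOr] at hV'
                    rw [← hV'] at hC2
                    have hv1 : IsStarTerm v1 := (dec_classes hsub).2.2.2 v1 rfl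
                    exact absurd hC2 (fun h => c_not_or hv1 h)
                | some v3 =>
                    simp only [bOr, STerm.or.injEq] at hV'
                    exact ⟨hV'.2, by rw [hV'.1]⟩
          have hUU : U1 = U3 := by
            cases U1 with
            | none =>
                cases U3 with
                | none => rfl
                | some u3 => simp at hU
            | some u1 =>
                cases U3 with
                | none => simp at hU
                | some u3 =>
                    simp only [Option.map_some, Option.some.injEq, STerm.or.injEq] at hU
                    rw [hU.1]
          rw [ih hsub2 hs ha htq hfq hUU hCC.2, hCC.1]

end Dev4
section Dev5
variable {A : Type}
open ETree

lemma size_node (l : ETree A) (a : A) (r : ETree A) :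
    (ETree.node l a r).size = l.size + r.size + 1 := rfl

/-- statement (A): grafts onto T-terms are uniquely decomposable -/
def StA (A : Type) (n : ℕ) : Prop :=
  ∀ (t1 t2 : STerm A) (U1 U2 : Option (STerm A)), IsTTerm t1 → IsTTerm t2 →
    optStar U1 → optStar U2 → gT t1 U1 = gT t2 U2 → (gT t1 U1).size ≤ n →
    t1 = t2 ∧ ((U1 = none ∧ U2 = none) ∨
      ∃ u1 u2, U1 = some u1 ∧ U2 = some u2 ∧ se u1 = se u2)

/-- statement (B): grafts onto F-terms are uniquely decomposable -/
def StB (A : Type) (n : ℕ) : Prop :=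
  ∀ (f1 f2 : STerm A) (V1 V2 : Option (STerm A)), IsFTerm f1 → IsFTerm f2 →
    optStar V1 → optStar V2 → gF f1 V1 = gF f2 V2 → (gF f1 V1).size ≤ n →
    f1 = f2 ∧ ((V1 = none ∧ V2 = none) ∨
      ∃ v1 v2, V1 = some v1 ∧ V2 = some v2 ∧ se v1 = se v2)

/-- statement (C): a T-graft equal to an F-graft forces equal continuations -/
def StC (A : Type) (n : ℕ) : Prop :=
  ∀ (t f u v : STerm A), IsTTerm t → IsFTerm f → IsStarTerm u → IsStarTerm v →
    gT t (some u) = gF f (some v) → (gT t (some u)).size ≤ n → se u = se v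

/-- statement (E): a star tree is not a nontrivial F-graft -/
def StE (A : Type) (n : ℕ) : Prop :=
  ∀ (W f v : STerm A), IsStarTerm W → IsFTerm f → f ≠ STerm.ff → IsStarTerm v →
    se W = gF f (some v) → (se W).size ≤ n → False

/-- statement (E'): a star tree is not a nontrivial T-graft -/
def StE' (A : Type) (n : ℕ) : Prop :=
  ∀ (W t u : STerm A), IsStarTerm W → IsTTerm t → t ≠ STerm.tt → IsStarTerm u →
    se W = gT t (some u) → (se W).size ≤ n → False

/-- statement (3): `se` is injective on star terms -/
def St3 (A : Type) (n : ℕ) : Prop :=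
  ∀ P Q : STerm A, IsStarTerm P → IsStarTerm Q → se P = se Q → (se P).size ≤ n → P = Q

def AllSt (A : Type) (n : ℕ) : Prop :=
  StE A n ∧ StE' A n ∧ StA A n ∧ StB A n ∧ StC A n ∧ St3 A n

theorem allSt (A : Type) (n : ℕ) : AllSt A n := by
  induction n using Nat.strong_induction_on with
  | _ n IH =>
  ----------------------------------------------------------------
  -- (E)
  have hE : StE A n := by
    intro W f v hW hf hne hv heq hsz
    cases hf with
    | ff => exact hne rfl
    | node a hfa hfb =>
      rename_i fa fb
      rw [gF_node a fb hfa (some v)] at heq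
      obtain ⟨s, b, tW, fW, UW, VW, hdec⟩ := dec_exists hW
      obtain ⟨htW, hfW, hUW, hVW⟩ := dec_classes hdec
      have hseW := dec_se hdec
      have key : ∀ (x y : STerm A), IsFTerm x → IsFTerm y →
          gT tW UW = gF x (some v) → gF fW VW = gF y (some v) →
          (gT tW UW).size < n → (gF fW VW).size < n → False := by
        intro x y hx hy h1 h2 s1 s2
        cases UW with
        | none =>
            have hh := hasF_gF hx (optStar_some hv)
            rw [← h1] at hh
            exact tt_noF htW hh
        | some uW =>
            obtain ⟨-, -, -, -, hCm, h3m⟩ := IH _ s1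
            have hsev : se uW = se v :=
              hCm tW x uW v htW hx (hUW uW rfl) hv h1 le_rfl
            have hszu : (se uW).size < n :=
              lt_of_le_of_lt (size_le_repl_T (tt_hasT htW) (se uW) .leafF) s1
            obtain ⟨-, -, -, -, -, h3u⟩ := IH _ hszu
            have huv : uW = v := h3u uW v (hUW uW rfl) hv hsev le_rfl
            obtain ⟨-, -, -, hBm, -, -⟩ := IH _ s2
            have hB' := hBm fW y VW (some v) hfW hy hVW (optStar_some hv) h2 le_rfl
            rcases hB'.2 with ⟨-, habs⟩ | ⟨vW, v', hVWe, hveq, hsevv⟩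
            · exact absurd habs (by simp)
            · injection hveq with hveq'
              subst hveq'
              have hszv : (se vW).size < n := by
                rw [hVWe] at s2
                exact lt_of_le_of_lt (size_le_repl_F (ff_hasF hfW) .leafT (se vW)) s2
              obtain ⟨-, -, -, -, -, h3v⟩ := IH _ hszv
              have hvv : vW = v := h3v vW v (hVW vW hVWe) hv hsevv le_rfl
              have hlk := dec_link hdec uW vW rfl hVWe
              rw [huv, hvv] at hlk
              exact link_or_link'_asym hlk hlk
      cases s with
      | true =>
          have e1 : se W = ETree.node (gT tW UW) b (gF fW VW) := hseW
          rw [e1] at heq hsz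
          injection heq with h1 hab h2
          rw [size_node] at hsz
          have p1 := size_pos (gT tW UW)
          have p2 := size_pos (gF fW VW)
          exact key fb fa hfb hfa h1 h2 (by omega) (by omega)
      | false =>
          have e1 : se W = ETree.node (gF fW VW) b (gT tW UW) := hseW
          rw [e1] at heq hsz
          injection heq with h1 hab h2
          rw [size_node] at hsz
          have p1 := size_pos (gT tW UW)
          have p2 := size_pos (gF fW VW)
          exact key fa fb hfa hfb h2 h1 (by omega) (by omega)
  ----------------------------------------------------------------
  -- (E')
  have hE' : StE' A n := by
    intro W t u hW ht hne hu heq hsz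
    cases ht with
    | tt => exact hne rfl
    | node a hta htb =>
      rename_i ta tb
      rw [gT_node a tb hta (some u)] at heq
      obtain ⟨s, b, tW, fW, UW, VW, hdec⟩ := dec_exists hW
      obtain ⟨htW, hfW, hUW, hVW⟩ := dec_classes hdec
      have hseW := dec_se hdec
      have key : ∀ (x y : STerm A), IsTTerm x → IsTTerm y →
          gT tW UW = gT x (some u) → gF fW VW = gT y (some u) →
          (gT tW UW).size < n → (gF fW VW).size < n → False := by
        intro x y hx hy h1 h2 s1 s2
        cases VW with
        | none =>
            have hh := hasT_gT hy (optStar_some hu)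
            rw [← h2] at hh
            exact ff_noT hfW hh
        | some vW =>
            obtain ⟨-, -, -, -, hCm, h3m⟩ := IH _ s2
            have hsev : se u = se vW :=
              hCm y fW u vW hy hfW hu (hVW vW rfl) h2.symm (by rw [← h2])
            have hszv : (se vW).size < n :=
              lt_of_le_of_lt (size_le_repl_F (ff_hasF hfW) .leafT (se vW)) s2
            obtain ⟨-, -, -, -, -, h3v⟩ := IH _ hszv
            have hvv : vW = u :=
              (h3v u vW hu (hVW vW rfl) hsev (by rw [hsev])).symm
            obtain ⟨-, -, hAm, -, -, -⟩ := IH _ s1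
            have hA' := hAm tW x UW (some u) htW hx hUW (optStar_some hu) h1 le_rfl
            rcases hA'.2 with ⟨-, habs⟩ | ⟨uW, u', hUWe, hueq, hseuu⟩
            · exact absurd habs (by simp)
            · injection hueq with hueq'
              subst hueq'
              have hszu : (se uW).size < n := by
                rw [hUWe] at s1
                exact lt_of_le_of_lt (size_le_repl_T (tt_hasT htW) (se uW) .leafF) s1
              obtain ⟨-, -, -, -, -, h3u⟩ := IH _ hszu
              have huu : uW = u := h3u uW u (hUW uW hUWe) hu hseuu le_rfl
              have hlk := dec_link hdec uW vW hUWe rfl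
              rw [huu, hvv] at hlk
              exact link_or_link'_asym hlk hlk
      cases s with
      | true =>
          have e1 : se W = ETree.node (gT tW UW) b (gF fW VW) := hseW
          rw [e1] at heq hsz
          injection heq with h1 hab h2
          rw [size_node] at hsz
          have p1 := size_pos (gT tW UW)
          have p2 := size_pos (gF fW VW)
          exact key ta tb hta htb h1 h2 (by omega) (by omega)
      | false =>
          have e1 : se W = ETree.node (gF fW VW) b (gT tW UW) := hseW
          rw [e1] at heq hsz
          injection heq with h1 hab h2
          rw [size_node] at hsz
          have p1 := size_pos (gT tW UW)
          have p2 := size_pos (gF fW VW)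
          exact key tb ta htb hta h2 h1 (by omega) (by omega)
  ----------------------------------------------------------------
  -- (A)
  have hA : StA A n := by
    intro t1 t2 U1 U2 ht1 ht2 hU1 hU2 heq hsz
    cases ht1 with
    | tt =>
      cases ht2 with
      | tt =>
        cases U1 with
        | none =>
            cases U2 with
            | none => exact ⟨rfl, Or.inl ⟨rfl, rfl⟩⟩
            | some u2 =>
                exfalso
                simp only [gT, se, repl] at heq
                have hh := (star_hasTF (hU2 u2 rfl)).2
                rw [← heq] at hh
                exact hh
        | some u1 =>
            cases U2 with
            | none =>
                exfalso
                simp only [gT, se, repl] at heq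
                have hh := (star_hasTF (hU1 u1 rfl)).2
                rw [heq] at hh
                exact hh
            | some u2 =>
                simp only [gT, se, repl] at heq
                exact ⟨rfl, Or.inr ⟨u1, u2, rfl, rfl, heq⟩⟩
      | node a2 ht2a ht2b =>
        rename_i t2a t2b
        exfalso
        rw [gT_node a2 t2b ht2a U2] at heq
        cases U1 with
        | none => exact absurd heq (by simp [gT, gF, se])
        | some u1 =>
            have heq' : se u1 = ETree.node (gT t2a U2) a2 (gT t2b U2) := heq
            cases U2 with
            | none =>
                have hf1 := (star_hasTF (hU1 u1 rfl)).2
                rw [heq'] at hf1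
                rcases hf1 with h | h
                · exact tt_noF ht2a h
                · exact tt_noF ht2b h
            | some u2 =>
                have heq'' : se u1 = gT (.or (.and (.atom a2) t2a) t2b) (some u2) := by
                  rw [gT_node a2 t2b ht2a (some u2)]
                  exact heq'
                have hszu : (se u1).size ≤ n := by
                  have : (gT STerm.tt (some u1)).size = (se u1).size := rfl
                  omega
                exact hE' u1 _ u2 (hU1 u1 rfl) (IsTTerm.node a2 ht2a ht2b)
                  (by intro h; cases h) (hU2 u2 rfl) heq'' hszu
    | node a1 ht1a ht1b =>
      rename_i t1a t1b
      cases ht2 with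
      | tt =>
        exfalso
        rw [gT_node a1 t1b ht1a U1] at heq
        cases U2 with
        | none => exact absurd heq (by simp [gT, gF, se])
        | some u2 =>
            have heq' : se u2 = ETree.node (gT t1a U1) a1 (gT t1b U1) := heq.symm
            cases U1 with
            | none =>
                have hf2 := (star_hasTF (hU2 u2 rfl)).2
                rw [heq'] at hf2
                rcases hf2 with h | h
                · exact tt_noF ht1a h
                · exact tt_noF ht1b h
            | some u1 =>
                have heq'' : se u2 = gT (.or (.and (.atom a1) t1a) t1b) (some u1) := by
                  rw [gT_node a1 t1b ht1a (some u1)]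
                  exact heq'
                have hszu : (se u2).size ≤ n := by
                  rw [gT_node a1 t1b ht1a (some u1)] at hsz
                  rw [heq']
                  exact hsz
                exact hE' u2 _ u1 (hU2 u2 rfl) (IsTTerm.node a1 ht1a ht1b)
                  (by intro h; cases h) (hU1 u1 rfl) heq'' hszu
      | node a2 ht2a ht2b =>
        rename_i t2a t2b
        rw [gT_node a1 t1b ht1a U1, gT_node a2 t2b ht2a U2] at heq
        rw [gT_node a1 t1b ht1a U1, size_node] at hsz
        injection heq with h1 hab h2
        subst hab
        have p1 := size_pos (gT t1a U1)
        have p2 := size_pos (gT t1b U1)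
        obtain ⟨-, -, hAm1, -, -, -⟩ := IH ((gT t1a U1).size) (by omega)
        obtain ⟨-, -, hAm2, -, -, -⟩ := IH ((gT t1b U1).size) (by omega)
        have r1 := hAm1 t1a t2a U1 U2 ht1a ht2a hU1 hU2 h1 le_rfl
        have r2 := hAm2 t1b t2b U1 U2 ht1b ht2b hU1 hU2 h2 le_rfl
        exact ⟨by rw [r1.1, r2.1], r1.2⟩
  ----------------------------------------------------------------
  -- (B)
  have hB : StB A n := by
    intro f1 f2 V1 V2 hf1 hf2 hV1 hV2 heq hsz
    cases hf1 with
    | ff =>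
      cases hf2 with
      | ff =>
        cases V1 with
        | none =>
            cases V2 with
            | none => exact ⟨rfl, Or.inl ⟨rfl, rfl⟩⟩
            | some v2 =>
                exfalso
                simp only [gF, se, repl] at heq
                have hh := (star_hasTF (hV2 v2 rfl)).1
                rw [← heq] at hh
                exact hh
        | some v1 =>
            cases V2 with
            | none =>
                exfalso
                simp only [gF, se, repl] at heq
                have hh := (star_hasTF (hV1 v1 rfl)).1
                rw [heq] at hh
                exact hh
            | some v2 =>
                simp only [gF, se, repl] at heq
                exact ⟨rfl, Or.inr ⟨v1, v2, rfl, rfl, heq⟩⟩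
      | node a2 hf2a hf2b =>
        rename_i f2a f2b
        exfalso
        rw [gF_node a2 f2b hf2a V2] at heq
        cases V1 with
        | none => exact absurd heq (by simp [gT, gF, se])
        | some v1 =>
            have heq' : se v1 = ETree.node (gF f2b V2) a2 (gF f2a V2) := heq
            cases V2 with
            | none =>
                have ht1 := (star_hasTF (hV1 v1 rfl)).1
                rw [heq'] at ht1
                rcases ht1 with h | h
                · exact ff_noT hf2b h
                · exact ff_noT hf2a h
            | some v2 =>
                have heq'' : se v1 = gF (.and (.or (.atom a2) f2a) f2b) (some v2) := by
                  rw [gF_node a2 f2b hf2a (some v2)]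
                  exact heq'
                have hszv : (se v1).size ≤ n := by
                  have : (gF STerm.ff (some v1)).size = (se v1).size := rfl
                  omega
                exact hE v1 _ v2 (hV1 v1 rfl) (IsFTerm.node a2 hf2a hf2b)
                  (by intro h; cases h) (hV2 v2 rfl) heq'' hszv
    | node a1 hf1a hf1b =>
      rename_i f1a f1b
      cases hf2 with
      | ff =>
        exfalso
        rw [gF_node a1 f1b hf1a V1] at heq
        cases V2 with
        | none => exact absurd heq (by simp [gT, gF, se])
        | some v2 =>
            have heq' : se v2 = ETree.node (gF f1b V1) a1 (gF f1a V1) := heq.symm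
            cases V1 with
            | none =>
                have ht2 := (star_hasTF (hV2 v2 rfl)).1
                rw [heq'] at ht2
                rcases ht2 with h | h
                · exact ff_noT hf1b h
                · exact ff_noT hf1a h
            | some v1 =>
                have heq'' : se v2 = gF (.and (.or (.atom a1) f1a) f1b) (some v1) := by
                  rw [gF_node a1 f1b hf1a (some v1)]
                  exact heq'
                have hszv : (se v2).size ≤ n := by
                  rw [gF_node a1 f1b hf1a (some v1)] at hsz
                  rw [heq']
                  exact hsz
                exact hE v2 _ v1 (hV2 v2 rfl) (IsFTerm.node a1 hf1a hf1b)
                  (by intro h; cases h) (hV1 v1 rfl) heq'' hszv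
      | node a2 hf2a hf2b =>
        rename_i f2a f2b
        rw [gF_node a1 f1b hf1a V1, gF_node a2 f2b hf2a V2] at heq
        rw [gF_node a1 f1b hf1a V1, size_node] at hsz
        injection heq with h1 hab h2
        subst hab
        have p1 := size_pos (gF f1b V1)
        have p2 := size_pos (gF f1a V1)
        obtain ⟨-, -, -, hBm1, -, -⟩ := IH ((gF f1b V1).size) (by omega)
        obtain ⟨-, -, -, hBm2, -, -⟩ := IH ((gF f1a V1).size) (by omega)
        have r1 := hBm1 f1b f2b V1 V2 hf1b hf2b hV1 hV2 h1 le_rfl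
        have r2 := hBm2 f1a f2a V1 V2 hf1a hf2a hV1 hV2 h2 le_rfl
        exact ⟨by rw [r1.1, r2.1], r1.2⟩
  ----------------------------------------------------------------
  -- (C)
  have hC : StC A n := by
    intro t f u v ht hf hu hv heq hsz
    cases ht with
    | tt =>
      cases hf with
      | ff =>
          simp only [gT, gF, se, repl] at heq
          exact heq
      | node a hfa hfb =>
          rename_i fa fb
          have heq' : se u = gF (.and (.or (.atom a) fa) fb) (some v) := heq
          have hsz' : (se u).size ≤ n := hsz
          exact (hE u _ v hu (IsFTerm.node a hfa hfb)
            (by intro h; cases h) hv heq' hsz').elim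
    | node a hta htb =>
      rename_i ta tb
      cases hf with
      | ff =>
          have heq' : se v = gT (.or (.and (.atom a) ta) tb) (some u) := heq.symm
          have hsz' : (se v).size ≤ n := by
            rw [heq']
            exact hsz
          exact (hE' v _ u hv (IsTTerm.node a hta htb)
            (by intro h; cases h) hu heq' hsz').elim
      | node a2 hfa hfb =>
          rename_i fa fb
          rw [gT_node a tb hta (some u), gF_node a2 fb hfa (some v)] at heq
          rw [gT_node a tb hta (some u), size_node] at hsz
          injection heq with h1 hab h2
          have p2 := size_pos (gT tb (some u))
          obtain ⟨-, -, -, -, hCm, -⟩ := IH ((gT ta (some u)).size) (by omega)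
          exact hCm ta fb u v hta hfb hu hv h1 le_rfl
  ----------------------------------------------------------------
  -- (3)
  have h3 : St3 A n := by
    intro P Q hP hQ heq hsz
    obtain ⟨s1, a1, t1, f1, U1, V1, hd1⟩ := dec_exists hP
    obtain ⟨ht1, hf1, hU1, hV1⟩ := dec_classes hd1
    obtain ⟨s2, a2, t2, f2, U2, V2, hd2⟩ := dec_exists hQ
    obtain ⟨ht2, hf2, hU2, hV2⟩ := dec_classes hd2
    have e1 := dec_se hd1
    have e2 := dec_se hd2
    cases s1 with
    | true =>
      have e1' : se P = ETree.node (gT t1 U1) a1 (gF f1 V1) := e1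
      rw [e1', size_node] at hsz
      have p1 := size_pos (gT t1 U1)
      have p2 := size_pos (gF f1 V1)
      cases s2 with
      | true =>
        have e2' : se Q = ETree.node (gT t2 U2) a2 (gF f2 V2) := e2
        rw [e1', e2'] at heq
        injection heq with hL ha hR
        subst ha
        obtain ⟨-, -, hAm, -, -, -⟩ := IH ((gT t1 U1).size) (by omega)
        obtain ⟨-, -, -, hBm, -, -⟩ := IH ((gF f1 V1).size) (by omega)
        have rA := hAm t1 t2 U1 U2 ht1 ht2 hU1 hU2 hL le_rfl
        have rB := hBm f1 f2 V1 V2 hf1 hf2 hV1 hV2 hR le_rfl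
        have hUU : U1 = U2 := by
          rcases rA.2 with ⟨hu1, hu2⟩ | ⟨u1, u2, hu1, hu2, hse⟩
          · rw [hu1, hu2]
          · have hszu : (se u1).size < n := by
              have := size_le_repl_T (tt_hasT ht1) (se u1) (.leafF : ETree A)
              have hg : (gT t1 (some u1)).size = ((se t1).repl (se u1) .leafF).size := rfl
              rw [hu1] at p1 hsz
              omega
            obtain ⟨-, -, -, -, -, h3m⟩ := IH _ hszu
            rw [hu1, hu2, h3m u1 u2 (hU1 u1 hu1) (hU2 u2 hu2) hse le_rfl]
        have hVV : V1 = V2 := by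
          rcases rB.2 with ⟨hv1, hv2⟩ | ⟨v1, v2, hv1, hv2, hse⟩
          · rw [hv1, hv2]
          · have hszv : (se v1).size < n := by
              have := size_le_repl_F (ff_hasF hf1) (.leafT : ETree A) (se v1)
              have hg : (gF f1 (some v1)).size = ((se f1).repl .leafT (se v1)).size := rfl
              rw [hv1] at p2 hsz
              omega
            obtain ⟨-, -, -, -, -, h3m⟩ := IH _ hszv
            rw [hv1, hv2, h3m v1 v2 (hV1 v1 hv1) (hV2 v2 hv2) hse le_rfl]
        exact psiInj hd1 hd2 rfl rfl rA.1 rB.1 hUU hVV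
      | false =>
        exfalso
        have e2' : se Q = ETree.node (gF f2 V2) a2 (gT t2 U2) := e2
        rw [e1', e2'] at heq
        injection heq with hL ha hR
        -- force options
        cases U1 with
        | none =>
            have hh := hasF_gF hf2 hV2
            rw [← hL] at hh
            exact tt_noF ht1 hh
        | some u1 =>
          cases V2 with
          | none =>
              have hh := hasT_gT ht1 hU1
              rw [hL] at hh
              exact ff_noT hf2 hh
          | some v2 =>
            cases U2 with
            | none =>
                have hh := hasF_gF hf1 hV1
                rw [hR] at hh
                exact tt_noF ht2 hh
            | some u2 =>
              cases V1 with
              | none =>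
                  have hh := hasT_gT ht2 hU2
                  rw [← hR] at hh
                  exact ff_noT hf1 hh
              | some v1 =>
                obtain ⟨-, -, -, -, hCm1, -⟩ := IH ((gT t1 (some u1)).size) (by omega)
                have hse1 : se u1 = se v2 := hCm1 t1 f2 u1 v2 ht1 hf2
                  (hU1 u1 rfl) (hV2 v2 rfl) hL le_rfl
                obtain ⟨-, -, -, -, hCm2, -⟩ := IH ((gT t2 (some u2)).size)
                  (by rw [← hR]; omega)
                have hse2 : se u2 = se v1 := hCm2 t2 f1 u2 v1 ht2 hf1
                  (hU2 u2 rfl) (hV1 v1 rfl) hR.symm le_rfl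
                have hszu1 : (se u1).size < n := by
                  have := size_le_repl_T (tt_hasT ht1) (se u1) (.leafF : ETree A)
                  have hg : (gT t1 (some u1)).size = ((se t1).repl (se u1) .leafF).size := rfl
                  omega
                obtain ⟨-, -, -, -, -, h3m1⟩ := IH _ hszu1
                have hu1v2 : u1 = v2 := h3m1 u1 v2 (hU1 u1 rfl) (hV2 v2 rfl) hse1 le_rfl
                have hszu2 : (se u2).size < n := by
                  have h1 := size_le_repl_T (tt_hasT ht2) (se u2) (.leafF : ETree A)
                  have hg : (gT t2 (some u2)).size = ((se t2).repl (se u2) .leafF).size := rfl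
                  have hR' : (gT t2 (some u2)).size = (gF f1 (some v1)).size := by rw [hR]
                  omega
                obtain ⟨-, -, -, -, -, h3m2⟩ := IH _ hszu2
                have hu2v1 : u2 = v1 := h3m2 u2 v1 (hU2 u2 rfl) (hV1 v1 rfl) hse2 le_rfl
                have hlk1 := dec_link hd1 u1 v1 rfl rfl
                have hlk2 := dec_link hd2 u2 v2 rfl rfl
                rw [hu2v1, ← hu1v2] at hlk2
                exact link_or_link'_asym hlk1 hlk2
    | false =>
      have e1' : se P = ETree.node (gF f1 V1) a1 (gT t1 U1) := e1
      rw [e1', size_node] at hsz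
      have p1 := size_pos (gF f1 V1)
      have p2 := size_pos (gT t1 U1)
      cases s2 with
      | false =>
        have e2' : se Q = ETree.node (gF f2 V2) a2 (gT t2 U2) := e2
        rw [e1', e2'] at heq
        injection heq with hL ha hR
        subst ha
        obtain ⟨-, -, -, hBm, -, -⟩ := IH ((gF f1 V1).size) (by omega)
        obtain ⟨-, -, hAm, -, -, -⟩ := IH ((gT t1 U1).size) (by omega)
        have rB := hBm f1 f2 V1 V2 hf1 hf2 hV1 hV2 hL le_rfl
        have rA := hAm t1 t2 U1 U2 ht1 ht2 hU1 hU2 hR le_rfl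
        have hUU : U1 = U2 := by
          rcases rA.2 with ⟨hu1, hu2⟩ | ⟨u1, u2, hu1, hu2, hse⟩
          · rw [hu1, hu2]
          · have hszu : (se u1).size < n := by
              have := size_le_repl_T (tt_hasT ht1) (se u1) (.leafF : ETree A)
              have hg : (gT t1 (some u1)).size = ((se t1).repl (se u1) .leafF).size := rfl
              rw [hu1] at p2 hsz
              omega
            obtain ⟨-, -, -, -, -, h3m⟩ := IH _ hszu
            rw [hu1, hu2, h3m u1 u2 (hU1 u1 hu1) (hU2 u2 hu2) hse le_rfl]
        have hVV : V1 = V2 := by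
          rcases rB.2 with ⟨hv1, hv2⟩ | ⟨v1, v2, hv1, hv2, hse⟩
          · rw [hv1, hv2]
          · have hszv : (se v1).size < n := by
              have := size_le_repl_F (ff_hasF hf1) (.leafT : ETree A) (se v1)
              have hg : (gF f1 (some v1)).size = ((se f1).repl .leafT (se v1)).size := rfl
              rw [hv1] at p1 hsz
              omega
            obtain ⟨-, -, -, -, -, h3m⟩ := IH _ hszv
            rw [hv1, hv2, h3m v1 v2 (hV1 v1 hv1) (hV2 v2 hv2) hse le_rfl]
        exact psiInj hd1 hd2 rfl rfl rA.1 rB.1 hUU hVV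
      | true =>
        exfalso
        have e2' : se Q = ETree.node (gT t2 U2) a2 (gF f2 V2) := e2
        rw [e1', e2'] at heq
        injection heq with hL ha hR
        cases U2 with
        | none =>
            have hh := hasF_gF hf1 hV1
            rw [hL] at hh
            exact tt_noF ht2 hh
        | some u2 =>
          cases V1 with
          | none =>
              have hh := hasT_gT ht2 hU2
              rw [← hL] at hh
              exact ff_noT hf1 hh
          | some v1 =>
            cases U1 with
            | none =>
                have hh := hasF_gF hf2 hV2
                rw [← hR] at hh
                exact tt_noF ht1 hh
            | some u1 =>
              cases V2 with
              | none =>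
                  have hh := hasT_gT ht1 hU1
                  rw [hR] at hh
                  exact ff_noT hf2 hh
              | some v2 =>
                obtain ⟨-, -, -, -, hCm1, -⟩ := IH ((gT t2 (some u2)).size)
                  (by rw [← hL]; omega)
                have hse1 : se u2 = se v1 := hCm1 t2 f1 u2 v1 ht2 hf1
                  (hU2 u2 rfl) (hV1 v1 rfl) hL.symm le_rfl
                obtain ⟨-, -, -, -, hCm2, -⟩ := IH ((gT t1 (some u1)).size) (by omega)
                have hse2 : se u1 = se v2 := hCm2 t1 f2 u1 v2 ht1 hf2
                  (hU1 u1 rfl) (hV2 v2 rfl) hR le_rfl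
                have hszu1 : (se u1).size < n := by
                  have := size_le_repl_T (tt_hasT ht1) (se u1) (.leafF : ETree A)
                  have hg : (gT t1 (some u1)).size = ((se t1).repl (se u1) .leafF).size := rfl
                  omega
                obtain ⟨-, -, -, -, -, h3m1⟩ := IH _ hszu1
                have hu1v2 : u1 = v2 := h3m1 u1 v2 (hU1 u1 rfl) (hV2 v2 rfl) hse2 le_rfl
                have hszu2 : (se u2).size < n := by
                  have h1 := size_le_repl_T (tt_hasT ht2) (se u2) (.leafF : ETree A)
                  have hg : (gT t2 (some u2)).size = ((se t2).repl (se u2) .leafF).size := rfl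
                  have hL' : (gT t2 (some u2)).size = (gF f1 (some v1)).size := by rw [hL]
                  omega
                obtain ⟨-, -, -, -, -, h3m2⟩ := IH _ hszu2
                have hu2v1 : u2 = v1 := h3m2 u2 v1 (hU2 u2 rfl) (hV1 v1 rfl) hse1 le_rfl
                have hlk1 := dec_link hd1 u1 v1 rfl rfl
                have hlk2 := dec_link hd2 u2 v2 rfl rfl
                rw [hu2v1, ← hu1v2] at hlk2
                exact link_or_link'_asym hlk1 hlk2
  exact ⟨hE, hE', hA, hB, hC, h3⟩

end Dev5
/-- `se` is injective on SNF: SNF-terms with equal evaluation trees are syntactically equal. -/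
theorem se_injective_on_snf {A : Type} [Nonempty A] (P Q : STerm A)
    (hP : IsSNF P) (hQ : IsSNF Q) (h : se P = se Q) : P = Q := by
  rcases hP with hP | hP | ⟨QP, RP, hQP, hRP, rfl⟩ <;>
    rcases hQ with hQ | hQ | ⟨QQ, RQ, hQQ, hRQ, rfl⟩
  · -- T vs T
    obtain ⟨-, -, hAm, -, -, -⟩ := allSt A ((se P).size)
    exact (hAm P Q none none hP hQ optStar_none optStar_none h le_rfl).1
  · -- T vs F
    have h1 := tt_hasT hP
    rw [h] at h1
    exact absurd h1 (ff_noT hQ)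
  · -- T vs and
    have h' : se P = gT QQ (some RQ) := h
    have h2 := hasF_gT_some hQQ hRQ
    rw [← h'] at h2
    exact absurd h2 (tt_noF hP)
  · -- F vs T
    have h1 := ff_hasF hP
    rw [h] at h1
    exact absurd h1 (tt_noF hQ)
  · -- F vs F
    obtain ⟨-, -, -, hBm, -, -⟩ := allSt A ((se P).size)
    exact (hBm P Q none none hP hQ optStar_none optStar_none h le_rfl).1
  · -- F vs and
    have h' : se P = gT QQ (some RQ) := h
    have h2 := hasT_gT hQQ (optStar_some hRQ)
    rw [← h'] at h2
    exact absurd h2 (ff_noT hP)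
  · -- and vs T
    have h' : gT QP (some RP) = se Q := h
    have h2 := hasF_gT_some hQP hRP
    rw [h'] at h2
    exact absurd h2 (tt_noF hQ)
  · -- and vs F
    have h' : gT QP (some RP) = se Q := h
    have h2 := hasT_gT hQP (optStar_some hRP)
    rw [h'] at h2
    exact absurd h2 (ff_noT hQ)
  · -- and vs and
    have h' : gT QP (some RP) = gT QQ (some RQ) := h
    obtain ⟨-, -, hAm, -, -, -⟩ := allSt A ((gT QP (some RP)).size)
    have r := hAm QP QQ (some RP) (some RQ) hQP hQQ
      (optStar_some hRP) (optStar_some hRQ) h' le_rfl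
    rcases r.2 with ⟨h1, -⟩ | ⟨u1, u2, hu1, hu2, hse⟩
    · exact absurd h1 (by simp)
    · injection hu1 with e1
      injection hu2 with e2
      subst e1
      subst e2
      obtain ⟨-, -, -, -, -, h3m⟩ := allSt A ((se RP).size)
      have hR : RP = RQ := h3m RP RQ hRP hRQ hse le_rfl
      rw [r.1, hR]
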